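/- The functions V₁(x,y,z) = (x+1)(y+1)(z+1)(a+x+y+z)/(xyz) and V₂(x,y,z) = (1+y+z)(1+x+y)(a+x+y+z+xz)/(xyz) are first integrals of the vector field X on O⁺, i.e. ∇V₁(q)·X(q) = 0 and ∇V₂(q)·X(q) = 0 for all q ∈ O⁺. -/

import Mathlib

private lemma lin_hasDerivAt (x v : ℝ) : HasDerivAt (fun t : ℝ => x + t * v) v 0 := by
  simpa using ((hasDerivAt_id (0:ℝ)).mul_const v).const_add x

private lemma fderiv_dir {f : ℝ × ℝ × ℝ → ℝ} {x y z v1 v2 v3 D : ℝ}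
    (hf : DifferentiableAt ℝ f (x, y, z))
    (hd : HasDerivAt (fun t : ℝ => f (x + t * v1, y + t * v2, z + t * v3)) D 0) :
    fderiv ℝ f (x, y, z) (v1, v2, v3) = D := by
  have line : HasDerivAt (fun t : ℝ => ((x + t * v1, y + t * v2, z + t * v3) : ℝ × ℝ × ℝ))
      (v1, v2, v3) 0 :=
    (lin_hasDerivAt x v1).prodMk ((lin_hasDerivAt y v2).prodMk (lin_hasDerivAt z v3))
  have e : ((x, y, z) : ℝ × ℝ × ℝ) = (x + (0:ℝ) * v1, y + 0 * v2, z + 0 * v3) := by norm_num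
  have hF : HasFDerivAt f (fderiv ℝ f (x, y, z)) ((x + (0:ℝ) * v1, y + 0 * v2, z + 0 * v3)) := by
    rw [← e]; exact hf.hasFDerivAt
  have chain : HasDerivAt (fun t : ℝ => f (x + t * v1, y + t * v2, z + t * v3))
      (fderiv ℝ f (x, y, z) (v1, v2, v3)) 0 := hF.comp_hasDerivAt 0 line
  exact chain.unique hd

theorem lyness_vector_field_first_integrals (a : ℝ) (ha : 0 < a) :
    let X : ℝ × ℝ × ℝ → ℝ × ℝ × ℝ := fun p =>
      ((p.1 + 1) * (1 + p.2.1 + p.2.2) * (p.2.1 * p.2.2 - p.1 - p.2.1 - a) / (p.2.1 * p.2.2),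
       (p.2.1 + 1) * (p.2.2 - p.1) * (a + p.1 + p.2.1 + p.2.2 + p.1 * p.2.2) / (p.1 * p.2.2),
       (p.2.2 + 1) * (1 + p.1 + p.2.1) * (a + p.2.1 + p.2.2 - p.1 * p.2.1) / (p.1 * p.2.1))
    let V1 : ℝ × ℝ × ℝ → ℝ := fun p =>
      (p.1 + 1) * (p.2.1 + 1) * (p.2.2 + 1) * (a + p.1 + p.2.1 + p.2.2) /
        (p.1 * p.2.1 * p.2.2)
    let V2 : ℝ × ℝ × ℝ → ℝ := fun p =>
      (1 + p.2.1 + p.2.2) * (1 + p.1 + p.2.1) *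
        (a + p.1 + p.2.1 + p.2.2 + p.1 * p.2.2) / (p.1 * p.2.1 * p.2.2)
    ∀ q : ℝ × ℝ × ℝ, 0 < q.1 → 0 < q.2.1 → 0 < q.2.2 →
      fderiv ℝ V1 q (X q) = 0 ∧ fderiv ℝ V2 q (X q) = 0 := by
  intro X V1 V2 q hx hy hz
  obtain ⟨x, y, z⟩ := q
  replace hx : 0 < x := hx
  replace hy : 0 < y := hy
  replace hz : 0 < z := hz
  simp only [X, V1, V2]
  set E1 : ℝ := (x + 1) * (1 + y + z) * (y * z - x - y - a) / (y * z) with hE1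
  set E2 : ℝ := (y + 1) * (z - x) * (a + x + y + z + x * z) / (x * z) with hE2
  set E3 : ℝ := (z + 1) * (1 + x + y) * (a + y + z - x * y) / (x * y) with hE3
  have hA := lin_hasDerivAt x E1
  have hB := lin_hasDerivAt y E2
  have hC := lin_hasDerivAt z E3
  have hden : HasDerivAt (fun t : ℝ => (x + t * E1) * (y + t * E2) * (z + t * E3)) _ 0 :=
    (hA.mul hB).mul hC
  have hden0 : (x + (0:ℝ) * E1) * (y + 0 * E2) * (z + 0 * E3) ≠ 0 := by
    simp [hx.ne', hy.ne', hz.ne']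
  constructor
  · have hnum : HasDerivAt (fun t : ℝ =>
        (x + t * E1 + 1) * (y + t * E2 + 1) * (z + t * E3 + 1) *
          (a + (x + t * E1) + (y + t * E2) + (z + t * E3))) _ 0 :=
      (((hA.add_const 1).mul (hB.add_const 1)).mul (hC.add_const 1)).mul
        (((hA.const_add a).add hB).add hC)
    have hd := hnum.div hden hden0
    have hdiff : DifferentiableAt ℝ (fun p : ℝ × ℝ × ℝ =>
        (p.1 + 1) * (p.2.1 + 1) * (p.2.2 + 1) * (a + p.1 + p.2.1 + p.2.2) /
          (p.1 * p.2.1 * p.2.2)) (x, y, z) := by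
      have h1 : DifferentiableAt ℝ (fun p : ℝ × ℝ × ℝ =>
          (p.1 + 1) * (p.2.1 + 1) * (p.2.2 + 1) * (a + p.1 + p.2.1 + p.2.2)) (x, y, z) := by
        fun_prop
      have h2 : DifferentiableAt ℝ (fun p : ℝ × ℝ × ℝ => p.1 * p.2.1 * p.2.2) (x, y, z) := by
        fun_prop
      have h3 : x * y * z ≠ 0 := ne_of_gt (by positivity)
      simp only [div_eq_mul_inv]
      exact h1.mul (h2.inv h3)
    rw [fderiv_dir hdiff hd, hE1, hE2, hE3]
    simp only [Pi.mul_apply, zero_mul, add_zero]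
    field_simp
    ring
  · have hnum : HasDerivAt (fun t : ℝ =>
        (1 + (y + t * E2) + (z + t * E3)) * (1 + (x + t * E1) + (y + t * E2)) *
          (a + (x + t * E1) + (y + t * E2) + (z + t * E3) + (x + t * E1) * (z + t * E3))) _ 0 :=
      (((hB.const_add 1).add hC).mul ((hA.const_add 1).add hB)).mul
        ((((hA.const_add a).add hB).add hC).add (hA.mul hC))
    have hd := hnum.div hden hden0
    have hdiff : DifferentiableAt ℝ (fun p : ℝ × ℝ × ℝ =>
        (1 + p.2.1 + p.2.2) * (1 + p.1 + p.2.1) *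
          (a + p.1 + p.2.1 + p.2.2 + p.1 * p.2.2) / (p.1 * p.2.1 * p.2.2)) (x, y, z) := by
      have h1 : DifferentiableAt ℝ (fun p : ℝ × ℝ × ℝ =>
          (1 + p.2.1 + p.2.2) * (1 + p.1 + p.2.1) *
            (a + p.1 + p.2.1 + p.2.2 + p.1 * p.2.2)) (x, y, z) := by
        fun_prop
      have h2 : DifferentiableAt ℝ (fun p : ℝ × ℝ × ℝ => p.1 * p.2.1 * p.2.2) (x, y, z) := by
        fun_prop
      have h3 : x * y * z ≠ 0 := ne_of_gt (by positivity)
      simp only [div_eq_mul_inv]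
      exact h1.mul (h2.inv h3)
    rw [fderiv_dir hdiff hd, hE1, hE2, hE3]
    simp only [Pi.mul_apply, Pi.add_apply, zero_mul, add_zero]
    field_simp
    ring
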